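/- If W satisfies the minimal constraints, W·ln W, W², and W³ are integrable, and the purity of W satisfies μ ≤ 1/2, then S[W] ≥ 1 + ln π. -/

import Mathlib

open Real MeasureTheory

lemma log_le_quad {t : ℝ} (ht : 0 < t) (ht1 : t ≤ 1) :
    Real.log t ≤ (t - 1) - (t - 1)^2 / 2 := by
  set g : ℝ → ℝ := fun x => Real.log x - (x - 1) + (x - 1)^2 / 2 with hg
  have hder : ∀ x ∈ Set.Ioo t 1, HasDerivAt g (x⁻¹ - 1 + (x - 1)) x := by
    intro x hx
    have hx0 : (0:ℝ) < x := lt_trans ht hx.1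
    have h1 : HasDerivAt (fun x : ℝ => x - 1) 1 x := (hasDerivAt_id x).sub_const 1
    have h2 : HasDerivAt (fun x : ℝ => (x - 1)^2 / 2) ((2 * (x-1) ^ 1 * 1) / 2) x :=
      (h1.pow 2).div_const 2
    have : HasDerivAt g (x⁻¹ - 1 + 2 * (x - 1) ^ 1 * 1 / 2) x := ((Real.hasDerivAt_log hx0.ne').sub h1).add h2
    convert this using 1
    ring
  have hcont : ContinuousOn g (Set.Icc t 1) := by
    apply ContinuousOn.add
    · apply ContinuousOn.sub
      · exact Real.continuousOn_log.mono (fun x hx => ne_of_gt (lt_of_lt_of_le ht hx.1))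
      · fun_prop
    · fun_prop
  have hmono : MonotoneOn g (Set.Icc t 1) := by
    apply monotoneOn_of_deriv_nonneg (convex_Icc t 1) hcont
    · intro x hx
      rw [interior_Icc] at hx
      exact (hder x hx).differentiableAt.differentiableWithinAt
    · intro x hx
      rw [interior_Icc] at hx
      rw [(hder x hx).deriv]
      have hx0 : (0:ℝ) < x := lt_trans ht hx.1
      have : x⁻¹ - 1 + (x - 1) = (x - 1)^2 / x := by
        field_simp; ring
      rw [this]
      positivity
  have := hmono (Set.mem_Icc.mpr ⟨le_refl t, ht1⟩) (Set.mem_Icc.mpr ⟨ht1, le_refl 1⟩) ht1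
  simp [hg] at this
  nlinarith [this]

lemma pointwise_bound {w : ℝ} (hw : 0 ≤ w) (hb : Real.pi * w ≤ 1) :
    (Real.log Real.pi + 3/2) * w - 2 * Real.pi * w^2 + (Real.pi^2/2) * w^3
      ≤ -(w * Real.log w) := by
  rcases eq_or_lt_of_le hw with h0 | h0
  · simp [← h0]
  · have htpos : 0 < Real.pi * w := mul_pos Real.pi_pos h0
    have hlogw : Real.log w = Real.log (Real.pi * w) - Real.log Real.pi := by
      rw [Real.log_mul Real.pi_ne_zero (ne_of_gt h0)]; ring
    have hk := log_le_quad htpos hb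
    rw [hlogw]
    have h1 : w * Real.log (Real.pi * w)
        ≤ w * ((Real.pi * w - 1) - (Real.pi * w - 1)^2 / 2) :=
      mul_le_mul_of_nonneg_left hk hw
    nlinarith [h1]

/-- If `W` satisfies the minimal constraints, `W·ln W`, `W²`, `W³` are integrable, and the
purity `μ = 2π ∫ W²` satisfies `μ ≤ 1/2`, then `S[W] ≥ 1 + ln π`. -/
theorem wigner_conjecture_of_purity_le_half (W : ℝ × ℝ → ℝ) (hmeas : Measurable W)
    (hpos : ∀ z, 0 ≤ W z)
    (hnorm : ∫ z, W z = 1)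
    (hbound : ∀ z, Real.pi * W z ≤ 1)
    (hlog : Integrable (fun z => W z * Real.log (W z)))
    (hsq : Integrable (fun z => (W z) ^ 2))
    (hcube : Integrable (fun z => (W z) ^ 3))
    (hmu : 2 * Real.pi * (∫ z, (W z) ^ 2) ≤ 1 / 2) :
    (-∫ z, W z * Real.log (W z)) ≥ 1 + Real.log Real.pi := by
  have hW : Integrable W := by
    by_contra h
    rw [integral_undef h] at hnorm
    norm_num at hnorm
  set a : ℝ := Real.log Real.pi + 3/2 with ha
  have hr : Integrable (fun z => a * W z - 2 * Real.pi * (W z)^2 + (Real.pi^2/2) * (W z)^3) :=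
    ((hW.const_mul a).sub (hsq.const_mul (2 * Real.pi))).add (hcube.const_mul (Real.pi^2/2))
  have hle : (∫ z, (a * W z - 2 * Real.pi * (W z)^2 + (Real.pi^2/2) * (W z)^3))
      ≤ ∫ z, -(W z * Real.log (W z)) := by
    apply integral_mono hr hlog.neg
    intro z
    exact pointwise_bound (hpos z) (hbound z)
  have hr1 : Integrable (fun z => a * W z - 2 * Real.pi * (W z)^2) :=
    (hW.const_mul a).sub (hsq.const_mul (2 * Real.pi))
  have hr3 : Integrable (fun z => (Real.pi^2/2) * (W z)^3) := hcube.const_mul (Real.pi^2/2)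
  have hsplit : (∫ z, (a * W z - 2 * Real.pi * (W z)^2 + (Real.pi^2/2) * (W z)^3))
      = a * (∫ z, W z) - 2 * Real.pi * (∫ z, (W z)^2) + (Real.pi^2/2) * (∫ z, (W z)^3) := by
    rw [integral_add hr1 hr3, integral_sub (hW.const_mul a) (hsq.const_mul (2 * Real.pi)),
      integral_const_mul, integral_const_mul, integral_const_mul]
  have hC : 0 ≤ ∫ z, (W z)^3 := integral_nonneg (fun z => pow_nonneg (hpos z) 3)
  rw [integral_neg] at hle
  rw [hsplit, hnorm] at hle
  have hpisq : 0 ≤ Real.pi^2/2 := by positivity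
  nlinarith [mul_nonneg hpisq hC]
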